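/- (Proposition: closedness of B-orbits through points with i = j = 0.) Let r be an upper triangular n×n complex matrix with pairwise distinct diagonal entries and let s be a lower triangular n×n complex matrix such that π([r,s]) = 0 (i.e. [r,s] is strictly upper triangular). Then the B_n-orbit of (r,s,0,0), namely the set {(b r b^{−1}, π(b s b^{−1})) : b ∈ B_n} ⊆ 𝔟_n × 𝔟*_n, is a closed subset of 𝔟_n × 𝔟*_n in the standard (Euclidean) topology. -/

import Mathlib

/-- `M` is an upper triangular complex matrix. -/
def IsUT {n : ℕ} (M : Matrix (Fin n) (Fin n) ℂ) : Prop :=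
  ∀ i j : Fin n, j < i → M i j = 0

/-- `M` is a lower triangular complex matrix (the chosen representatives of
`𝔟*ₙ = 𝔤𝔩ₙ/𝔫⁺`). -/
def IsLT {n : ℕ} (M : Matrix (Fin n) (Fin n) ℂ) : Prop :=
  ∀ i j : Fin n, i < j → M i j = 0

/-- The projection `π : 𝔤𝔩ₙ → 𝔟*ₙ` zeroing out all entries strictly above the
diagonal. -/
def lowProj {n : ℕ} (M : Matrix (Fin n) (Fin n) ℂ) : Matrix (Fin n) (Fin n) ℂ :=
  Matrix.of fun i j => if j ≤ i then M i j else 0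

namespace BorelAux

open Matrix Polynomial Finset

variable {n : ℕ}

/-- strictly upper triangular -/
def IsSUT {n : ℕ} (M : Matrix (Fin n) (Fin n) ℂ) : Prop :=
  ∀ i j : Fin n, j ≤ i → M i j = 0

lemma isUT_bt {M : Matrix (Fin n) (Fin n) ℂ} (h : IsUT M) : M.BlockTriangular id :=
  fun i j hij => h i j hij

lemma bt_isUT {M : Matrix (Fin n) (Fin n) ℂ} (h : M.BlockTriangular id) : IsUT M :=
  fun i j hij => h hij

lemma ut_mul {A B : Matrix (Fin n) (Fin n) ℂ} (hA : IsUT A) (hB : IsUT B) :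
    IsUT (A * B) := bt_isUT ((isUT_bt hA).mul (isUT_bt hB))

lemma mul_diag {A B : Matrix (Fin n) (Fin n) ℂ} (hA : IsUT A) (hB : IsUT B) (i : Fin n) :
    (A * B) i i = A i i * B i i := by
  rw [Matrix.mul_apply]
  refine Finset.sum_eq_single i (fun k _ hk => ?_) (by simp)
  rcases lt_or_gt_of_ne hk with h | h
  · rw [hA i k h, zero_mul]
  · rw [hB k i h, mul_zero]

lemma ut_inv {B : Matrix (Fin n) (Fin n) ℂ} (hB : IsUT B) (h : IsUnit B.det) :
    IsUT B⁻¹ := by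
  haveI := B.invertibleOfIsUnitDet h
  exact bt_isUT (Matrix.blockTriangular_inv_of_blockTriangular (isUT_bt hB))

lemma mul_sut {A U : Matrix (Fin n) (Fin n) ℂ} (hA : IsUT A) (hU : IsSUT U) :
    IsSUT (A * U) := by
  intro i j hji
  rw [Matrix.mul_apply]
  refine Finset.sum_eq_zero fun k _ => ?_
  rcases lt_or_ge k i with h | h
  · rw [hA i k h, zero_mul]
  · rw [hU k j (hji.trans h), mul_zero]

lemma sut_mul {U A : Matrix (Fin n) (Fin n) ℂ} (hU : IsSUT U) (hA : IsUT A) :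
    IsSUT (U * A) := by
  intro i j hji
  rw [Matrix.mul_apply]
  refine Finset.sum_eq_zero fun k _ => ?_
  rcases lt_or_ge j k with h | h
  · rw [hA k j h, mul_zero]
  · rw [hU i k (h.trans hji), zero_mul]

lemma ut_pow {A : Matrix (Fin n) (Fin n) ℂ} (hA : IsUT A) (k : ℕ) : IsUT (A ^ k) := by
  induction k with
  | zero => intro i j hij; rw [pow_zero]; exact Matrix.one_apply_ne hij.ne'
  | succ k ih => rw [pow_succ]; exact ut_mul ih hA

lemma pow_diag {A : Matrix (Fin n) (Fin n) ℂ} (hA : IsUT A) (k : ℕ) (i : Fin n) :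
    (A ^ k) i i = (A i i) ^ k := by
  induction k with
  | zero => simp [Matrix.one_apply]
  | succ k ih => rw [pow_succ, mul_diag (ut_pow hA k) hA, ih, pow_succ]

lemma aeval_ut {A : Matrix (Fin n) (Fin n) ℂ} (hA : IsUT A) (p : ℂ[X]) :
    IsUT (aeval A p) := by
  rw [Polynomial.aeval_eq_sum_range]
  intro i j hij
  rw [Matrix.sum_apply]
  refine Finset.sum_eq_zero fun k _ => ?_
  rw [Matrix.smul_apply, ut_pow hA k i j hij, smul_zero]

lemma aeval_diag {A : Matrix (Fin n) (Fin n) ℂ} (hA : IsUT A) (p : ℂ[X]) (i : Fin n) :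
    (aeval A p) i i = p.eval (A i i) := by
  rw [Polynomial.aeval_eq_sum_range, Polynomial.eval_eq_sum_range, Matrix.sum_apply]
  refine Finset.sum_congr rfl fun k _ => ?_
  rw [Matrix.smul_apply, pow_diag hA, smul_eq_mul]

lemma aeval_comm (A : Matrix (Fin n) (Fin n) ℂ) (p : ℂ[X]) :
    A * aeval A p = aeval A p * A := by
  rw [Polynomial.aeval_eq_sum_range, Finset.mul_sum, Finset.sum_mul]
  refine Finset.sum_congr rfl fun k _ => ?_
  rw [Matrix.mul_smul, Matrix.smul_mul, ((Commute.refl A).pow_right k).eq]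

lemma conj_pow {b A : Matrix (Fin n) (Fin n) ℂ} (hb : IsUnit b.det) (k : ℕ) :
    (b * A * b⁻¹) ^ k = b * A ^ k * b⁻¹ := by
  have hcan : ∀ X : Matrix (Fin n) (Fin n) ℂ, b⁻¹ * (b * X) = X := fun X => by
    rw [← Matrix.mul_assoc, Matrix.nonsing_inv_mul _ hb, Matrix.one_mul]
  induction k with
  | zero => rw [pow_zero, pow_zero, Matrix.mul_one, Matrix.mul_nonsing_inv _ hb]
  | succ k ih =>
    rw [pow_succ, ih, pow_succ]
    simp only [Matrix.mul_assoc]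
    rw [hcan]

lemma conj_aeval {b A : Matrix (Fin n) (Fin n) ℂ} (hb : IsUnit b.det) (p : ℂ[X]) :
    aeval (b * A * b⁻¹) p = b * aeval A p * b⁻¹ := by
  rw [Polynomial.aeval_eq_sum_range (x := b * A * b⁻¹),
    Polynomial.aeval_eq_sum_range (x := A), Finset.mul_sum, Finset.sum_mul]
  refine Finset.sum_congr rfl fun k _ => ?_
  rw [conj_pow hb, Matrix.mul_smul, Matrix.smul_mul]

lemma lowProj_sub (M N : Matrix (Fin n) (Fin n) ℂ) :
    lowProj (M - N) = lowProj M - lowProj N := by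
  ext i j
  simp only [lowProj, Matrix.of_apply, Matrix.sub_apply]
  by_cases h : j ≤ i
  · rw [if_pos h, if_pos h, if_pos h]
  · rw [if_neg h, if_neg h, if_neg h, sub_zero]

lemma lowProj_sut {U : Matrix (Fin n) (Fin n) ℂ} (hU : IsSUT U) : lowProj U = 0 := by
  ext i j
  simp only [lowProj, Matrix.of_apply, Matrix.zero_apply]
  by_cases h : j ≤ i
  · rw [if_pos h]; exact hU i j h
  · rw [if_neg h]

/-- uniqueness: a strictly lower triangular `t` with `π([r,t]) = 0` vanishes. -/
lemma strict_lower_zero {r t : Matrix (Fin n) (Fin n) ℂ} (hr : IsUT r)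
    (hdist : ∀ i j : Fin n, i ≠ j → r i i ≠ r j j)
    (ht : ∀ i j : Fin n, i ≤ j → t i j = 0)
    (h : ∀ i j : Fin n, j ≤ i → (r * t - t * r) i j = 0) : t = 0 := by
  have main : ∀ d : ℕ, ∀ i j : Fin n, n ≤ d + (i.val - j.val) → t i j = 0 := by
    intro d
    induction d with
    | zero =>
      intro i j hle
      exfalso
      have := i.isLt
      omega
    | succ d ih =>
      intro i j hle
      rcases le_or_gt i j with hij | hij
      · exact ht i j hij
      have hij' : j.val < i.val := hij
      have h1 : (r * t) i j = r i i * t i j := by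
        rw [Matrix.mul_apply]
        refine Finset.sum_eq_single i (fun k _ hk => ?_) (by simp)
        rcases lt_or_gt_of_ne hk with hlt | hgt
        · rw [hr i k hlt, zero_mul]
        · have hgt' : i.val < k.val := hgt
          rw [ih k j (by omega), mul_zero]
      have h2 : (t * r) i j = t i j * r j j := by
        rw [Matrix.mul_apply]
        refine Finset.sum_eq_single j (fun k _ hk => ?_) (by simp)
        rcases lt_or_gt_of_ne hk with hlt | hgt
        · have hlt' : k.val < j.val := hlt
          rw [ih i k (by omega), zero_mul]
        · rw [hr k j hgt, mul_zero]
      have h0 := h i j hij.le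
      rw [Matrix.sub_apply, h1, h2] at h0
      have hne : r i i - r j j ≠ 0 := sub_ne_zero_of_ne (hdist i j hij.ne')
      have hfac : (r i i - r j j) * t i j = 0 := by linear_combination h0
      rcases mul_eq_zero.mp hfac with h' | h'
      · exact absurd h' hne
      · exact h'
  ext i j
  have := i.isLt
  simpa using main n i j (by omega)

/-- the `j`-th eigenvector of an upper triangular matrix, normalized to have
`j`-th coordinate `1` and supported on coordinates `≤ j`. -/
noncomputable def evec (r : Matrix (Fin n) (Fin n) ℂ) (j : Fin n) : Fin n → ℂ
  | i =>
    if j ≤ i then (if i = j then 1 else 0)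
    else (∑ k ∈ (Finset.Ioi i).attach, r i k.1 * evec r j k.1) / (r j j - r i i)
termination_by i => n - i.val
decreasing_by
  rename_i hk
  have h1 : i < k.1 := Finset.mem_Ioi.mp k.2
  have h2 : (i : ℕ) < k.1 := h1
  have := k.1.isLt
  omega

lemma evec_self (r : Matrix (Fin n) (Fin n) ℂ) (j : Fin n) : evec r j j = 1 := by
  rw [evec]
  simp

lemma evec_gt (r : Matrix (Fin n) (Fin n) ℂ) {i j : Fin n} (h : j < i) : evec r j i = 0 := by
  rw [evec]
  rw [if_pos h.le, if_neg h.ne']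

lemma evec_lt (r : Matrix (Fin n) (Fin n) ℂ) {i j : Fin n} (h : i < j) :
    evec r j i = (∑ k ∈ Finset.Ioi i, r i k * evec r j k) / (r j j - r i i) := by
  rw [evec, if_neg (not_le.mpr h)]
  exact congrArg (· / (r j j - r i i)) (Finset.sum_attach (Finset.Ioi i) (fun k => r i k * evec r j k))

/-- eigenvector matrix -/
noncomputable def gmat (r : Matrix (Fin n) (Fin n) ℂ) : Matrix (Fin n) (Fin n) ℂ :=
  Matrix.of fun i j => evec r j i

lemma gmat_ut (r : Matrix (Fin n) (Fin n) ℂ) : IsUT (gmat r) :=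
  fun _ j h => evec_gt r h

lemma gmat_det (r : Matrix (Fin n) (Fin n) ℂ) : IsUnit (gmat r).det := by
  rw [Matrix.det_of_upperTriangular (isUT_bt (gmat_ut r))]
  have : ∀ i : Fin n, gmat r i i = 1 := fun i => evec_self r i
  simp [this]

lemma gmat_conj {r : Matrix (Fin n) (Fin n) ℂ} (hr : IsUT r)
    (hdist : ∀ i j : Fin n, i ≠ j → r i i ≠ r j j) :
    r * gmat r = gmat r * Matrix.diagonal (fun i => r i i) := by
  ext i j
  rw [Matrix.mul_apply, Matrix.mul_diagonal]
  simp only [gmat, Matrix.of_apply]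
  have hsplit : ∑ k, r i k * evec r j k
      = r i i * evec r j i + ∑ k ∈ Finset.Ioi i, r i k * evec r j k := by
    rw [← Finset.sum_subset (Finset.subset_univ (Finset.Ici i))
      (fun x _ hx => by rw [hr i x (lt_of_not_ge (fun hc => hx (Finset.mem_Ici.mpr hc))), zero_mul]),
      ← Finset.Ioi_insert, Finset.sum_insert Finset.notMem_Ioi_self]
  rw [hsplit]
  rcases lt_trichotomy i j with hij | rfl | hij
  · have hden : r j j - r i i ≠ 0 := sub_ne_zero_of_ne (Ne.symm (hdist i j hij.ne))
    have he : evec r j i * (r j j - r i i) = ∑ k ∈ Finset.Ioi i, r i k * evec r j k := by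
      rw [evec_lt r hij, div_mul_cancel₀ _ hden]
    linear_combination -he
  · rw [evec_self]
    have : ∑ k ∈ Finset.Ioi i, r i k * evec r i k = 0 :=
      Finset.sum_eq_zero fun k hk => by rw [evec_gt r (Finset.mem_Ioi.mp hk), mul_zero]
    rw [this]
    ring
  · rw [evec_gt r hij]
    have : ∑ k ∈ Finset.Ioi i, r i k * evec r j k = 0 :=
      Finset.sum_eq_zero fun k hk => by
        rw [evec_gt r (hij.trans (Finset.mem_Ioi.mp hk)), mul_zero]
    rw [this]
    ring

lemma conj_eq {A : Matrix (Fin n) (Fin n) ℂ} (hA : IsUT A)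
    (hAd : ∀ i j : Fin n, i ≠ j → A i i ≠ A j j) :
    A * gmat A = gmat A * Matrix.diagonal (fun i => A i i) := gmat_conj hA hAd

end BorelAux

set_option maxHeartbeats 2000000 in
open BorelAux Matrix Polynomial in
/-- Closedness of `B`-orbits through points with `i = j = 0`. -/
theorem Borel_orbit_closed_when_i_j_zero
    (n : ℕ) (hn : 1 ≤ n)
    (r s : Matrix (Fin n) (Fin n) ℂ) (hr : IsUT r)
    (hdist : ∀ i j : Fin n, i ≠ j → r i i ≠ r j j)
    (hs : IsLT s)
    (hcomm : ∀ ι γ : Fin n, γ ≤ ι → (r * s - s * r) ι γ = 0) :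
    IsClosed {p : Matrix (Fin n) (Fin n) ℂ × Matrix (Fin n) (Fin n) ℂ |
      ∃ b : Matrix (Fin n) (Fin n) ℂ, IsUT b ∧ IsUnit b.det ∧
        p = (b * r * b⁻¹, lowProj (b * s * b⁻¹))} := by
  classical
  set P : ℂ[X] :=
    Lagrange.interpolate Finset.univ (fun i => r i i) (fun i => s i i) with hPdef
  have hinj : Set.InjOn (fun i => r i i) (Finset.univ : Finset (Fin n)) := by
    intro i _ j _ h
    by_contra hne
    exact hdist i j hne h
  have hPeval : ∀ i, P.eval (r i i) = s i i := fun i =>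
    Lagrange.eval_interpolate_at_node (v := fun i => r i i) (s := Finset.univ) _ hinj (Finset.mem_univ i)
  set S : Matrix (Fin n) (Fin n) ℂ := aeval r P with hSdef
  have hS_ut : IsUT S := aeval_ut hr P
  have hS_diag : ∀ i, S i i = s i i := fun i => by
    rw [hSdef, aeval_diag hr, hPeval]
  -- the key identity : s = lowProj (aeval r P)
  have hkey : s = lowProj S := by
    have hU : IsSUT (S - lowProj S) := by
      intro i j hji
      simp [lowProj, Matrix.sub_apply, hji]
    have hL0 : ∀ i j : Fin n, j ≤ i → (r * lowProj S - lowProj S * r) i j = 0 := by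
      intro i j hji
      have hrw : r * lowProj S - lowProj S * r = (S - lowProj S) * r - r * (S - lowProj S) := by
        rw [Matrix.mul_sub, Matrix.sub_mul, aeval_comm r P]
        abel
      rw [hrw, Matrix.sub_apply, sut_mul hU hr i j hji, mul_sut hr hU i j hji, sub_zero]
    have ht : ∀ i j : Fin n, i ≤ j → (s - lowProj S) i j = 0 := by
      intro i j hij
      rcases hij.lt_or_eq with hlt | heq
      · rw [Matrix.sub_apply, hs i j hlt]
        simp [lowProj, not_le.mpr hlt]
      · subst heq
        rw [Matrix.sub_apply]
        simp [lowProj, hS_diag i]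
    have hc : ∀ i j : Fin n, j ≤ i → (r * (s - lowProj S) - (s - lowProj S) * r) i j = 0 := by
      intro i j hji
      have e1 := hcomm i j hji
      have e2 := hL0 i j hji
      simp only [Matrix.mul_sub, Matrix.sub_mul, Matrix.sub_apply] at e1 e2 ⊢
      linear_combination e1 - e2
    have := strict_lower_zero hr hdist ht hc
    have := sub_eq_zero.mp this
    exact this
  -- forward computation of the second component
  have forward : ∀ b : Matrix (Fin n) (Fin n) ℂ, IsUT b → IsUnit b.det →
      lowProj (b * s * b⁻¹) = lowProj (aeval (b * r * b⁻¹) P) := by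
    intro b hb hbd
    have hU : IsSUT (S - s) := by
      intro i j hji
      rw [Matrix.sub_apply, hkey]
      simp [lowProj, hji]
    have hsplit : b * s * b⁻¹ = b * S * b⁻¹ - b * (S - s) * b⁻¹ := by
      rw [Matrix.mul_sub, Matrix.sub_mul]
      abel
    have hSUT : IsSUT (b * (S - s) * b⁻¹) := sut_mul (mul_sut hb hU) (ut_inv hb hbd)
    rw [hsplit, lowProj_sub, lowProj_sut hSUT, sub_zero, conj_aeval hbd]
  -- the closed description of the orbit
  have horb : {p : Matrix (Fin n) (Fin n) ℂ × Matrix (Fin n) (Fin n) ℂ |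
      ∃ b : Matrix (Fin n) (Fin n) ℂ, IsUT b ∧ IsUnit b.det ∧
        p = (b * r * b⁻¹, lowProj (b * s * b⁻¹))}
      = {q : Matrix (Fin n) (Fin n) ℂ × Matrix (Fin n) (Fin n) ℂ |
          IsUT q.1 ∧ (∀ i, q.1 i i = r i i) ∧ q.2 = lowProj (aeval q.1 P)} := by
    ext q
    constructor
    · rintro ⟨b, hb, hbd, rfl⟩
      have hbinv : IsUT b⁻¹ := ut_inv hb hbd
      have hcut : IsUT (b * r * b⁻¹) := ut_mul (ut_mul hb hr) hbinv
      refine ⟨hcut, fun i => ?_, ?_⟩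
      · show (b * r * b⁻¹) i i = r i i
        rw [mul_diag (ut_mul hb hr) hbinv, mul_diag hb hr]
        have h2 : b i i * b⁻¹ i i = 1 := by
          have h := mul_diag hb hbinv i
          rw [Matrix.mul_nonsing_inv _ hbd, Matrix.one_apply_eq] at h
          exact h.symm
        calc b i i * r i i * b⁻¹ i i = r i i * (b i i * b⁻¹ i i) := by ring
          _ = r i i := by rw [h2, mul_one]
      · show lowProj (b * s * b⁻¹) = lowProj (aeval (b * r * b⁻¹) P)
        exact forward b hb hbd
    · rintro ⟨hq1, hq2, hq3⟩
      have hdist' : ∀ i j : Fin n, i ≠ j → q.1 i i ≠ q.1 j j := by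
        intro i j hij
        rw [hq2 i, hq2 j]
        exact hdist i j hij
      set g : Matrix (Fin n) (Fin n) ℂ := gmat r with hgdef
      set g' : Matrix (Fin n) (Fin n) ℂ := gmat q.1 with hg'def
      have hgd : IsUnit g.det := gmat_det r
      have hg'd : IsUnit g'.det := gmat_det q.1
      have h1 : r * g = g * Matrix.diagonal (fun i => r i i) := gmat_conj hr hdist
      have h2 : q.1 * g' = g' * Matrix.diagonal (fun i => r i i) := by
        have := gmat_conj hq1 hdist'
        have hDD : (Matrix.diagonal (fun i => q.1 i i)) = Matrix.diagonal (fun i => r i i) := by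
          have h : (fun i => q.1 i i) = fun i => r i i := funext hq2
          rw [h]
        rw [hDD] at this
        exact this
      set D : Matrix (Fin n) (Fin n) ℂ := Matrix.diagonal (fun i => r i i) with hDdef
      set b : Matrix (Fin n) (Fin n) ℂ := g' * g⁻¹ with hbdef
      have hb_ut : IsUT b := ut_mul (gmat_ut q.1) (ut_inv (gmat_ut r) hgd)
      have hb_det : IsUnit b.det := by
        rw [hbdef, Matrix.det_mul]
        exact hg'd.mul (Matrix.isUnit_nonsing_inv_det _ hgd)
      have hb_inv : b⁻¹ = g * g'⁻¹ := by
        rw [hbdef, Matrix.mul_inv_rev, Matrix.nonsing_inv_nonsing_inv _ hgd]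
      have hcan : ∀ X : Matrix (Fin n) (Fin n) ℂ, g⁻¹ * (g * X) = X := fun X => by
        rw [← Matrix.mul_assoc, Matrix.nonsing_inv_mul _ hgd, Matrix.one_mul]
      have hbr : b * r * b⁻¹ = q.1 := by
        rw [hb_inv, hbdef]
        have e1 : r * (g * g'⁻¹) = g * (D * g'⁻¹) := by
          rw [← Matrix.mul_assoc, h1, Matrix.mul_assoc]
        have e2 : q.1 = g' * (D * g'⁻¹) := by
          rw [← Matrix.mul_assoc, ← h2, Matrix.mul_assoc,
            Matrix.mul_nonsing_inv _ hg'd, Matrix.mul_one]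
        simp only [Matrix.mul_assoc]
        rw [e1, hcan, ← e2]
      refine ⟨b, hb_ut, hb_det, ?_⟩
      have hsnd : q.2 = lowProj (b * s * b⁻¹) := by
        rw [forward b hb_ut hb_det, hbr, hq3]
      exact Prod.ext (by rw [hbr]) (by rw [← hsnd])
  rw [horb]
  -- closedness of the explicit description
  have hsplit : {q : Matrix (Fin n) (Fin n) ℂ × Matrix (Fin n) (Fin n) ℂ |
        IsUT q.1 ∧ (∀ i, q.1 i i = r i i) ∧ q.2 = lowProj (aeval q.1 P)}
      = (⋂ i : Fin n, ⋂ j : Fin n,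
          {q : Matrix (Fin n) (Fin n) ℂ × Matrix (Fin n) (Fin n) ℂ | j < i → q.1 i j = 0})
        ∩ ((⋂ i : Fin n,
            {q : Matrix (Fin n) (Fin n) ℂ × Matrix (Fin n) (Fin n) ℂ | q.1 i i = r i i})
          ∩ {q : Matrix (Fin n) (Fin n) ℂ × Matrix (Fin n) (Fin n) ℂ |
              q.2 = lowProj (aeval q.1 P)}) := by
    ext q
    simp only [Set.mem_setOf_eq, Set.mem_inter_iff, Set.mem_iInter]
    exact ⟨fun ⟨a, b, c⟩ => ⟨a, b, c⟩, fun ⟨a, b, c⟩ => ⟨a, b, c⟩⟩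
  rw [hsplit]
  refine IsClosed.inter ?_ (IsClosed.inter ?_ ?_)
  · refine isClosed_iInter fun i => isClosed_iInter fun j => ?_
    by_cases h : j < i
    · simp only [h, true_implies]
      exact isClosed_eq ((continuous_fst.matrix_elem i j)) continuous_const
    · simp only [h, false_implies, Set.setOf_true]
      exact isClosed_univ
  · exact isClosed_iInter fun i =>
      isClosed_eq (continuous_fst.matrix_elem i i) continuous_const
  · refine isClosed_eq continuous_snd ?_
    refine continuous_matrix fun i j => ?_
    simp only [lowProj, Matrix.of_apply]
    by_cases h : j ≤ i
    · simp only [h, if_true]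
      exact ((P.continuous_aeval).comp continuous_fst).matrix_elem i j
    · simp only [h, if_false]
      exact continuous_const
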